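/- Let P be an (L, K, F, Z, S) multiple-antenna placement delivery array, let g and s ∈ [S] be such that the integer s appears exactly g times in P with g ≥ 2L, at positions (f_1, k_1), …, (f_g, k_g) (the columns k_1, …, k_g are pairwise distinct by condition C3). Let H be an L×K complex matrix such that every L×L column-submatrix of H is invertible, and let H_s denote the L×g submatrix of H on the columns k_1, …, k_g. Then there exists a g×g complex matrix V such that: (i) V i j = 0 whenever P(f_j, k_i) is an integer (i.e., whenever user k_i does not cache the packet indexed by f_j); and (ii) the matrix B := H_sᴴ · H_s · V satisfies B j j = 1 for every j ∈ [g], and B i j = 0 for every i ≠ j such that P(f_j, k_i) is an integer. -/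

import Mathlib

open Matrix

/-- An `(L, K, F, Z, S)` multiple-antenna placement delivery array (MAPDA). -/
def IsMAPDA (L K F Z S : ℕ) (P : Fin F → Fin K → Option (Fin S)) : Prop :=
  (∀ k : Fin K, (Finset.univ.filter fun f : Fin F => P f k = none).card = Z) ∧
  (∀ s : Fin S, ∃ f k, P f k = some s) ∧
  (∀ (s : Fin S) (k : Fin K) (f₁ f₂ : Fin F),
      P f₁ k = some s → P f₂ k = some s → f₁ = f₂) ∧
  (∀ (s : Fin S) (f : Fin F), (∃ k, P f k = some s) →
      (Finset.univ.filter fun k : Fin K =>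
        (∃ f', P f' k = some s) ∧ (P f k).isSome = true).card ≤ L)

/-- For an invertible matrix and any vector `u`, `M *ᵥ (M⁻¹ *ᵥ u) = u`. -/
lemma mulVec_nonsing_inv_mulVec {n : ℕ} (M : Matrix (Fin n) (Fin n) ℂ)
    (hM : IsUnit M) (u : Fin n → ℂ) : M *ᵥ (M⁻¹ *ᵥ u) = u := by
  rw [Matrix.mulVec_mulVec, Matrix.mul_nonsing_inv _ ((Matrix.isUnit_iff_isUnit_det M).mp hM),
    Matrix.one_mulVec]

/-- Core of Theorem 1: given an `(L, K, F, Z, S)` MAPDA `P`, an integer `s`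
appearing exactly `g ≥ 2L` times, at positions `(f j, k j)` for `j ∈ [g]` (the
columns `k j` pairwise distinct), and a generic channel matrix `H` (every
`L × L` column-submatrix invertible), letting `H_s` be the submatrix of `H` on
columns `k 1, …, k g`, there is a `g × g` precoding matrix `V` vanishing at
`(i, j)` whenever `P (f j) (k i)` is an integer, such that `B = H_sᴴ H_s V` has
ones on the diagonal and `B i j = 0` for every `i ≠ j` with `P (f j) (k i)` an
integer (one-shot decodability with identity downlink precoding). -/
theorem exists_precoding_matrix_of_MAPDA (L K F Z S : ℕ)
    (hL : 0 < L) (hK : 0 < K) (hF : 0 < F) (hZ : 0 < Z) (hS : 0 < S)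
    (P : Fin F → Fin K → Option (Fin S)) (hP : IsMAPDA L K F Z S P)
    (g : ℕ) (hg : 2 * L ≤ g) (s : Fin S)
    (f : Fin g → Fin F) (k : Fin g → Fin K)
    (hkinj : Function.Injective k)
    (hocc : ∀ j : Fin g, P (f j) (k j) = some s)
    (hall : ∀ (f' : Fin F) (k' : Fin K), P f' k' = some s → ∃ j : Fin g, f' = f j ∧ k' = k j)
    (H : Matrix (Fin L) (Fin K) ℂ)
    (hH : ∀ e : Fin L → Fin K, Function.Injective e → IsUnit (H.submatrix id e)) :
    ∃ V : Matrix (Fin g) (Fin g) ℂ,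
      (∀ i j : Fin g, (P (f j) (k i)).isSome = true → V i j = 0) ∧
      (∀ j : Fin g, ((H.submatrix id k)ᴴ * H.submatrix id k * V) j j = 1) ∧
      (∀ i j : Fin g, i ≠ j → (P (f j) (k i)).isSome = true →
          ((H.submatrix id k)ᴴ * H.submatrix id k * V) i j = 0) := by
  set Hs : Matrix (Fin L) (Fin g) ℂ := H.submatrix id k with hHs
  have hLg : L ≤ g := le_trans (by omega) hg
  -- key claim: for each column index j there is a suitable vector v
  have key : ∀ j : Fin g, ∃ v : Fin g → ℂ,
      (∀ i : Fin g, (P (f j) (k i)).isSome = true → v i = 0) ∧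
      (∀ i : Fin g, (P (f j) (k i)).isSome = true →
        ((Hsᴴ * Hs) *ᵥ v) i = if i = j then 1 else 0) := by
    intro j
    set A : Finset (Fin g) := Finset.univ.filter fun i => (P (f j) (k i)).isSome with hAdef
    have hmemA : ∀ i : Fin g, i ∈ A ↔ (P (f j) (k i)).isSome := by
      intro i; simp [hAdef]
    -- card A ≤ L by condition C4
    have hA : A.card ≤ L := by
      have h4 := hP.2.2.2 s (f j) ⟨k j, hocc j⟩
      refine le_trans ?_ h4
      have : A.image k ⊆ Finset.univ.filter fun k' : Fin K =>
          (∃ f', P f' k' = some s) ∧ (P (f j) k').isSome = true := by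
        intro x hx
        rcases Finset.mem_image.mp hx with ⟨i, hi, rfl⟩
        rw [hmemA] at hi
        exact Finset.mem_filter.mpr ⟨Finset.mem_univ _, ⟨f i, hocc i⟩, hi⟩
      calc A.card = (A.image k).card := (Finset.card_image_of_injective _ hkinj).symm
        _ ≤ _ := Finset.card_le_card this
    -- pick T ⊆ Aᶜ with card L
    have hAc : L ≤ Aᶜ.card := by
      have := Finset.card_compl A
      simp only [Fintype.card_fin] at this
      omega
    obtain ⟨T, hTsub, hTcard⟩ := Finset.exists_subset_card_eq hAc
    -- pick A' ⊇ A with card L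
    obtain ⟨A', hAA', _, hA'card⟩ :=
      Finset.exists_subsuperset_card_eq (Finset.subset_univ A) hA
        (by simpa using hLg)
    let e1 : Fin L → Fin g := fun l => ((T.equivFinOfCardEq hTcard).symm l : Fin g)
    have he1inj : Function.Injective e1 := fun a b h => by
      have := Subtype.ext h
      simpa using (T.equivFinOfCardEq hTcard).symm.injective this
    have he1mem : ∀ l, e1 l ∈ T := fun l => ((T.equivFinOfCardEq hTcard).symm l).2
    let e2 : Fin L → Fin g := fun l => ((A'.equivFinOfCardEq hA'card).symm l : Fin g)
    have he2inj : Function.Injective e2 := fun a b h => by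
      have := Subtype.ext h
      simpa using (A'.equivFinOfCardEq hA'card).symm.injective this
    -- matrices
    set M : Matrix (Fin L) (Fin L) ℂ := H.submatrix id (k ∘ e1) with hMdef
    set N : Matrix (Fin L) (Fin L) ℂ := H.submatrix id (k ∘ e2) with hNdef
    have hM : IsUnit M := hH _ (hkinj.comp he1inj)
    have hN : IsUnit N := hH _ (hkinj.comp he2inj)
    have hNH : IsUnit Nᴴ := by
      rw [Matrix.isUnit_iff_isUnit_det, Matrix.det_conjTranspose]
      exact ((Matrix.isUnit_iff_isUnit_det N).mp hN).star
    set t : Fin L → ℂ := fun l => if e2 l = j then 1 else 0 with htdef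
    set u : Fin L → ℂ := Nᴴ⁻¹ *ᵥ t with hudef
    set w : Fin L → ℂ := M⁻¹ *ᵥ u with hwdef
    set v : Fin g → ℂ := fun i => ∑ l : Fin L, if i = e1 l then w l else 0 with hvdef
    have hHsv : Hs *ᵥ v = u := by
      funext r
      have : (Hs *ᵥ v) r = (M *ᵥ w) r := by
        simp only [Matrix.mulVec, dotProduct, hvdef, Finset.mul_sum, mul_ite, mul_zero]
        rw [Finset.sum_comm]
        refine Finset.sum_congr rfl fun l _ => ?_
        rw [Finset.sum_ite_eq' Finset.univ (e1 l)]
        simp [hHs, hMdef]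
      rw [this, hwdef, mulVec_nonsing_inv_mulVec M hM]
    refine ⟨v, ?_, ?_⟩
    · intro i hi
      have hiA : i ∈ A := (hmemA i).mpr hi
      rw [hvdef]
      refine Finset.sum_eq_zero fun l _ => ?_
      have : i ≠ e1 l := by
        intro h
        have : e1 l ∈ Aᶜ := hTsub (he1mem l)
        rw [← h, Finset.mem_compl] at this
        exact this hiA
      simp [this]
    · intro i hi
      have hiA' : i ∈ A' := hAA' ((hmemA i).mpr hi)
      have hrw : (Hsᴴ * Hs) *ᵥ v = Hsᴴ *ᵥ u := by
        rw [← Matrix.mulVec_mulVec, hHsv]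
      rw [hrw]
      set l : Fin L := A'.equivFinOfCardEq hA'card ⟨i, hiA'⟩ with hldef
      have he2l : e2 l = i := by
        simp [e2, hldef]
      have : (Hsᴴ *ᵥ u) i = (Nᴴ *ᵥ u) l := by
        simp [Matrix.mulVec, dotProduct, hHs, hNdef, Matrix.conjTranspose_apply, he2l]
      rw [this, hudef, mulVec_nonsing_inv_mulVec _ hNH, htdef]
      simp [he2l]
  -- assemble V from the columns
  choose v hv0 hveq using key
  refine ⟨fun i j => v j i, fun i j hij => hv0 j i hij, ?_, ?_⟩
  · intro j
    have h := hveq j j (by rw [hocc j]; rfl)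
    change (Hsᴴ * Hs * Matrix.of (fun i j => v j i)) j j = 1
    simpa [Matrix.mulVec, dotProduct, Matrix.mul_apply] using h
  · intro i j hne hij
    have h := hveq j i hij
    rw [if_neg hne] at h
    change (Hsᴴ * Hs * Matrix.of (fun i j => v j i)) i j = 0
    simpa [Matrix.mulVec, dotProduct, Matrix.mul_apply] using h
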